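/- (Conditional Importance Matching Lemma, conditional-on-proposals form.) Let 𝒴 and 𝒵 be countable alphabets. Let (S_i, Y_i)_{i=1}^N be i.i.d. with Y_i ∼ p_Y on 𝒴 and S_i ∼ Exponential(1) independent of Y_i. Let X ∼ p_X be independent of (S_i, Y_i)_{i=1}^N, with conditional distribution p_{Y|X}. Given X = x, let U_P = argmin_{1≤i≤N} S_i · p_Y(Y_i)/p_{Y|X}(Y_i|x) and Y = Y_{U_P}; sample Z ∼ p_{Z|X,Y}(·|x, Y), so that Z → (X, Y) → (S_i, Y_i)_{i=1}^N forms a Markov chain. Let Q_{Y|Z} be any conditional distribution with Q_{Y|Z}(y|z)/p_Y(y) ≤ ω for all y, z, and given Z = z let U_Q = argmin_{1≤i≤N} S_i · p_Y(Y_i)/Q_{Y|Z}(Y_i|z). Then for every k, x, z, and samples (y_1,…,y_N): Pr(U_P ≠ U_Q | U_P = k, X = x, Z = z, (Y_1,…,Y_N) = (y_1,…,y_N)) ≤ 1 − (1 + (p_{Y|X}(y_k|x)/Q_{Y|Z}(y_k|z)) · ((1/N)Σ_{j=1}^N Q_{Y|Z}(y_j|z)/p_Y(y_j)) / ((1/N)Σ_{j=1}^N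 p_{Y|X}(y_j|x)/p_Y(y_j)))^{-1}. -/

import Mathlib

open MeasureTheory ProbabilityTheory Real Set
open scoped ENNReal

lemma expTail {c : ℝ} (hc : 0 ≤ c) : expMeasure 1 (Set.Ioi c) = ENNReal.ofReal (Real.exp (-c)) := by
  haveI : IsProbabilityMeasure (expMeasure 1) := isProbabilityMeasure_expMeasure one_pos
  have he1 : Real.exp (-c) ≤ 1 := Real.exp_le_one_iff.mpr (by linarith)
  have hIic : expMeasure 1 (Set.Iic c) = ENNReal.ofReal (1 - Real.exp (-c)) := by
    rw [expMeasure, gammaMeasure, withDensity_apply _ measurableSet_Iic]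
    have := lintegral_exponentialPDF_eq_antiDeriv (r := 1) one_pos c
    rw [if_pos hc, one_mul] at this
    calc ∫⁻ y in Set.Iic c, gammaPDF 1 1 y = ∫⁻ y in Set.Iic c, exponentialPDF 1 y := by rfl
      _ = ENNReal.ofReal (1 - Real.exp (-c)) := this
  have : Set.Ioi c = (Set.Iic c)ᶜ := by simp
  rw [this, measure_compl measurableSet_Iic (measure_ne_top _ _), hIic, measure_univ]
  rw [← ENNReal.ofReal_one, ← ENNReal.ofReal_sub _ (by linarith : (0:ℝ) ≤ 1 - Real.exp (-c))]
  congr 1; ring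

lemma expSingleton (c : ℝ) : expMeasure 1 {c} = 0 :=
  (withDensity_absolutelyContinuous _ _) (by simp : (volume : Measure ℝ) {c} = 0)

lemma expTail' {c : ℝ} (hc : 0 ≤ c) : expMeasure 1 (Set.Ici c) = ENNReal.ofReal (Real.exp (-c)) := by
  refine le_antisymm ?_ (by rw [← expTail hc]; exact measure_mono Set.Ioi_subset_Ici_self)
  calc expMeasure 1 (Set.Ici c) = expMeasure 1 (Set.Ioi c ∪ {c}) := by rw [Set.Ioi_union_left]
    _ ≤ expMeasure 1 (Set.Ioi c) + expMeasure 1 {c} := measure_union_le _ _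
    _ = ENNReal.ofReal (Real.exp (-c)) := by rw [expSingleton, expTail hc, add_zero]


lemma expLint {M : ℝ} (hM : 0 ≤ M) {g : ℝ → ℝ≥0∞} (hg : Measurable g)
    (hgs : ∀ s, 0 ≤ s → g s = ENNReal.ofReal (Real.exp (-(M * s)))) :
    ∫⁻ s, g s ∂(expMeasure 1) = ENNReal.ofReal (1 + M)⁻¹ := by
  have hr : (0:ℝ) < 1 + M := by linarith
  have hd : Measurable (exponentialPDF 1) :=
    (measurable_exponentialPDFReal 1).ennreal_ofReal
  rw [expMeasure, gammaMeasure,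
    lintegral_withDensity_eq_lintegral_mul _ (by exact hd) hg]
  have hpt : ∀ s, exponentialPDF 1 s * g s
      = ENNReal.ofReal (1 + M)⁻¹ * exponentialPDF (1 + M) s := by
    intro s
    rcases le_or_gt 0 s with hs | hs
    · rw [hgs s hs, exponentialPDF_of_nonneg hs, exponentialPDF_of_nonneg hs,
        ← ENNReal.ofReal_mul (by positivity), ← ENNReal.ofReal_mul (by positivity)]
      congr 1
      rw [one_mul, ← Real.exp_add, show -(1*s) + -(M * s) = -((1+M)*s) by ring]
      field_simp
    · rw [exponentialPDF_of_neg hs, exponentialPDF_of_neg hs, zero_mul, mul_zero]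
  calc ∫⁻ s, exponentialPDF 1 s * g s
      = ∫⁻ s, ENNReal.ofReal (1 + M)⁻¹ * exponentialPDF (1 + M) s := by
        exact lintegral_congr hpt
    _ = ENNReal.ofReal (1 + M)⁻¹ * ∫⁻ s, exponentialPDF (1 + M) s := by
        exact lintegral_const_mul _ ((measurable_exponentialPDFReal _).ennreal_ofReal)
    _ = ENNReal.ofReal (1 + M)⁻¹ := by rw [lintegral_exponentialPDF_eq_one hr, mul_one]


lemma key {𝒴 : Type*} [MeasurableSpace 𝒴] [MeasurableSingletonClass 𝒴]
    (P : Measure 𝒴) [IsProbabilityMeasure P]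
    {Ω : Type*} [MeasurableSpace Ω] (μ : Measure Ω) [IsProbabilityMeasure μ]
    {N : ℕ} (S : Fin N → Ω → ℝ) (Y : Fin N → Ω → 𝒴)
    (hSmeas : ∀ i, Measurable (S i)) (hYmeas : ∀ i, Measurable (Y i))
    (hindep : iIndepFun (fun i ω => (S i ω, Y i ω)) μ)
    (hlaw : ∀ i, μ.map (fun ω => (S i ω, Y i ω)) = (expMeasure 1).prod P)
    (k : Fin N) (yv : Fin N → 𝒴) (m : Fin N → ℝ) (hm : ∀ j, 0 ≤ m j)
    (t : Fin N → ℝ → Set ℝ)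
    (htm : ∀ j, MeasurableSet {q : ℝ × ℝ | q.2 ∈ t j q.1})
    (htv : ∀ j s, 0 ≤ s → expMeasure 1 (t j s) = ENNReal.ofReal (Real.exp (-(m j * s)))) :
    μ {ω | (∀ i, Y i ω = yv i) ∧ ∀ j, j ≠ k → S j ω ∈ t j (S k ω)}
      = (∏ i, P {yv i}) * ENNReal.ofReal (1 + ∑ j ∈ ({k}ᶜ : Finset (Fin N)), m j)⁻¹ := by
  classical
  haveI : IsProbabilityMeasure (expMeasure 1) := isProbabilityMeasure_expMeasure one_pos
  set U : Finset (Fin N) := {k}ᶜ with hU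
  have hmemU : ∀ j : Fin N, j ∈ U ↔ j ≠ k := by
    intro j; simp [hU]
  have hpair : ∀ i, Measurable (fun ω => (S i ω, Y i ω)) :=
    fun i => (hSmeas i).prodMk (hYmeas i)
  set W : Ω → ℝ × 𝒴 := fun ω => (S k ω, Y k ω) with hWdef
  set R : Ω → (U → ℝ × 𝒴) := fun ω (j : U) => (S j ω, Y j ω) with hRdef
  have hW : Measurable W := hpair k
  have hR : Measurable R := measurable_pi_lambda _ (fun j => hpair j)
  -- independence of W and R
  have hWR : IndepFun W R μ := by
    have h1 := hindep.indepFun_finset {k} U (by simp [hU]) hpair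
    have h2 := h1.comp (φ := fun g : ({k} : Finset (Fin N)) → ℝ × 𝒴 =>
      g ⟨k, Finset.mem_singleton_self k⟩) (ψ := id) (_mγ := inferInstance) (measurable_pi_apply _) measurable_id
    exact h2
  -- the target set as a preimage in the product space
  set tset : Fin N → Set (ℝ × ℝ) := fun j => {q : ℝ × ℝ | q.2 ∈ t j q.1} with htsetdef
  set C : Set ((ℝ × 𝒴) × (U → ℝ × 𝒴)) :=
    ((fun p : (ℝ × 𝒴) × (U → ℝ × 𝒴) => p.1.2) ⁻¹' {yv k}) ∩
      ⋂ j : U, ((fun p : (ℝ × 𝒴) × (U → ℝ × 𝒴) => (p.1.1, (p.2 j).1)) ⁻¹' tset (j : Fin N) ∩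
        (fun p : (ℝ × 𝒴) × (U → ℝ × 𝒴) => (p.2 j).2) ⁻¹' {yv (j : Fin N)}) with hCdef
  have hCm : MeasurableSet C := by
    apply MeasurableSet.inter
    · exact (measurable_fst.snd) (measurableSet_singleton _)
    · apply MeasurableSet.iInter
      intro j
      apply MeasurableSet.inter
      · exact ((measurable_fst.fst).prodMk
          (((measurable_pi_apply j).comp measurable_snd).fst)) (htm j)
      · exact (((measurable_pi_apply j).comp measurable_snd).snd) (measurableSet_singleton _)
  have hCmem : ∀ p : (ℝ × 𝒴) × (U → ℝ × 𝒴),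
      p ∈ C ↔ p.1.2 = yv k ∧ ∀ j : U, (p.2 j).1 ∈ t (j : Fin N) p.1.1 ∧ (p.2 j).2 = yv (j : Fin N) := by
    intro p
    simp only [hCdef, Set.mem_inter_iff, Set.mem_preimage, Set.mem_singleton_iff,
      Set.mem_iInter, htsetdef, Set.mem_setOf_eq]
  have hpre : {ω | (∀ i, Y i ω = yv i) ∧ ∀ j, j ≠ k → S j ω ∈ t j (S k ω)}
      = (fun ω => (W ω, R ω)) ⁻¹' C := by
    ext ω
    simp only [Set.mem_setOf_eq, Set.mem_preimage, hCmem]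
    constructor
    · rintro ⟨h1, h2⟩
      exact ⟨h1 k, fun j => ⟨h2 j ((hmemU j).mp j.2), h1 j⟩⟩
    · rintro ⟨h1, h2⟩
      constructor
      · intro i
        by_cases hik : i = k
        · rw [hik]; exact h1
        · exact (h2 ⟨i, (hmemU i).mpr hik⟩).2
      · intro j hj
        exact (h2 ⟨j, (hmemU j).mpr hj⟩).1
  haveI : IsProbabilityMeasure (μ.map R) := Measure.isProbabilityMeasure_map hR.aemeasurable
  have hmap : μ.map (fun ω => (W ω, R ω)) = ((expMeasure 1).prod P).prod (μ.map R) := by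
    rw [← hlaw k]
    exact (indepFun_iff_map_prod_eq_prod_map_map hW.aemeasurable hR.aemeasurable).mp hWR
  rw [hpre, ← Measure.map_apply (hW.prodMk hR) hCm, hmap, Measure.prod_apply hCm]
  -- compute the slice measures
  have htmeas : ∀ (j : Fin N) (s : ℝ), MeasurableSet (t j s) := by
    intro j s
    exact measurable_prodMk_left (htm j)
  have hslice : ∀ p : ℝ × 𝒴, μ.map R (Prod.mk p ⁻¹' C)
      = (∏ j ∈ U, (expMeasure 1 (t j p.1) * P {yv j})) *
          Set.indicator {yv k} (fun _ => (1 : ℝ≥0∞)) p.2 := by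
    intro p
    by_cases hp : p.2 = yv k
    · have hs1 : Prod.mk p ⁻¹' C = Set.univ.pi
          (fun j : U => (t (j : Fin N) p.1) ×ˢ ({yv (j : Fin N)} : Set 𝒴)) := by
        ext g
        simp only [Set.mem_preimage, hCmem, Set.mem_pi, Set.mem_univ, forall_true_left,
          Set.mem_prod, Set.mem_singleton_iff, hp, true_and]
      have hs2 : R ⁻¹' (Set.univ.pi
          (fun j : U => (t (j : Fin N) p.1) ×ˢ ({yv (j : Fin N)} : Set 𝒴)))
          = ⋂ j ∈ U, (fun ω => (S j ω, Y j ω)) ⁻¹' ((t j p.1) ×ˢ ({yv j} : Set 𝒴)) := by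
        ext ω
        simp only [Set.mem_preimage, Set.mem_pi, Set.mem_univ, forall_true_left, hRdef,
          Set.mem_iInter]
        constructor
        · intro h j hj; exact h ⟨j, hj⟩
        · intro h j; exact h j j.2
      rw [hs1, Measure.map_apply hR
        (MeasurableSet.univ_pi (fun j => (htmeas j p.1).prod (measurableSet_singleton _))),
        hs2, hindep.meas_biInter (fun j _ =>
          ⟨(t j p.1) ×ˢ ({yv j} : Set 𝒴),
            (htmeas j p.1).prod (measurableSet_singleton _), rfl⟩)]
      rw [Set.indicator_of_mem (by simp [hp]) , mul_one]
      apply Finset.prod_congr rfl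
      intro j _
      rw [← Measure.map_apply (hpair j) ((htmeas j p.1).prod (measurableSet_singleton _)),
        hlaw j, Measure.prod_prod]
    · have : Prod.mk p ⁻¹' C = ∅ := by
        ext g; simp [hCmem, hp]
      rw [this, measure_empty, Set.indicator_of_notMem (by simp [hp]), mul_zero]
  rw [lintegral_congr hslice]
  -- separate the product integral
  set M : ℝ := ∑ j ∈ U, m j with hM
  have hMnonneg : 0 ≤ M := Finset.sum_nonneg (fun j _ => hm j)
  have hmeasT : ∀ j : Fin N, Measurable (fun s : ℝ => expMeasure 1 (t j s)) := by
    intro j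
    have := measurable_measure_prodMk_left (ν := expMeasure 1) (htm j)
    exact this
  have hf0 : Measurable (fun s : ℝ => ∏ j ∈ U, (expMeasure 1 (t j s) * P {yv j})) :=
    Finset.measurable_prod _ (fun j _ => (hmeasT j).mul_const _)
  have hg0 : Measurable (fun y : 𝒴 => Set.indicator {yv k} (fun _ => (1 : ℝ≥0∞)) y) :=
    measurable_const.indicator (measurableSet_singleton _)
  rw [lintegral_prod_mul hf0.aemeasurable hg0.aemeasurable]
  have hint1 : ∫⁻ y, Set.indicator {yv k} (fun _ => (1 : ℝ≥0∞)) y ∂P = P {yv k} := by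
    exact lintegral_indicator_one (measurableSet_singleton (yv k))
  have hint2 : ∫⁻ s, (∏ j ∈ U, (expMeasure 1 (t j s) * P {yv j})) ∂(expMeasure 1)
      = ENNReal.ofReal (1 + M)⁻¹ * ∏ j ∈ U, P {yv j} := by
    have hsplit : ∀ s : ℝ, (∏ j ∈ U, (expMeasure 1 (t j s) * P {yv j}))
        = (∏ j ∈ U, expMeasure 1 (t j s)) * ∏ j ∈ U, P {yv j} := by
      intro s; rw [Finset.prod_mul_distrib]
    rw [lintegral_congr hsplit, lintegral_mul_const _
      (Finset.measurable_prod _ (fun j _ => hmeasT j))]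
    congr 1
    apply expLint hMnonneg (Finset.measurable_prod _ (fun j _ => hmeasT j))
    intro s hs
    have : ∀ j ∈ U, expMeasure 1 (t j s) = ENNReal.ofReal (Real.exp (-(m j * s))) :=
      fun j _ => htv j s hs
    rw [Finset.prod_congr rfl this, ← ENNReal.ofReal_prod_of_nonneg
      (fun j _ => (Real.exp_pos _).le), ← Real.exp_sum]
    congr 2
    rw [hM, Finset.sum_mul]
    simp
  rw [hint1, hint2]
  have hprodsplit : (∏ i, P {yv i}) = P {yv k} * ∏ j ∈ U, P {yv j} := by
    rw [hU, ← Finset.prod_mul_prod_compl {k} (fun i => P {yv i}), Finset.prod_singleton]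
  rw [hprodsplit]
  ring

set_option maxHeartbeats 2000000 in
/-- Conditional Importance Matching Lemma, conditional-on-proposals form.
On countable alphabets `𝒴`, `𝒵`: `(S i, Y i)` are i.i.d. with `Y i ∼ P` (pmf `pY`) and
`S i ∼ Exponential(1)`; `X` (and the fresh randomness `V` used to sample
`Z ∼ p_{Z|X,Y}(·|X, Y_{U_P})`, realized as `Z = ζ(X, Y_{U_P}, V)`) is independent of the
`(S i, Y i)`.  The encoder selects `U_P = argmin_i S i ⬝ pY (Y i)/p_{Y|X}(Y i|X)` and the
decoder `U_Q = argmin_i S i ⬝ pY (Y i)/Q_{Y|Z}(Y i|Z)`, where `Q_{Y|Z}(y|z) ≤ ω pY y`.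
Then for all `k`, `x`, `z`, and proposal values `y₁,…,y_N`:
`Pr(U_P ≠ U_Q ∣ U_P = k, X = x, Z = z, Y^N = y^N)
  ≤ 1 − (1 + (p_{Y|X}(y_k|x)/Q_{Y|Z}(y_k|z)) ⬝
      ((1/N)∑ⱼ Q_{Y|Z}(yⱼ|z)/pY yⱼ)/((1/N)∑ⱼ p_{Y|X}(yⱼ|x)/pY yⱼ))⁻¹`. -/
theorem stmt14
    {𝒳 : Type*} [MeasurableSpace 𝒳] [MeasurableSingletonClass 𝒳]
    {𝒴 : Type*} [Countable 𝒴] [MeasurableSpace 𝒴] [MeasurableSingletonClass 𝒴]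
    {𝒵 : Type*} [Countable 𝒵] [MeasurableSpace 𝒵] [MeasurableSingletonClass 𝒵]
    {𝒱 : Type*} [MeasurableSpace 𝒱]
    (P : Measure 𝒴) [IsProbabilityMeasure P]
    (pY : 𝒴 → ℝ) (hpY : ∀ y, P {y} = ENNReal.ofReal (pY y)) (hpY_pos : ∀ y, 0 < pY y)
    (om : ℝ)
    (pYX : 𝒳 → 𝒴 → ℝ) (hpYX_pos : ∀ x y, 0 < pYX x y)
    (hpYX_sum : ∀ x, ∑' y, pYX x y = 1)
    (QYZ : 𝒵 → 𝒴 → ℝ) (hQ_pos : ∀ z y, 0 < QYZ z y)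
    (hQ_sum : ∀ z, ∑' y, QYZ z y = 1)
    (hQ_om : ∀ z y, QYZ z y ≤ om * pY y)
    {Ω : Type*} [MeasurableSpace Ω] (μ : Measure Ω) [IsProbabilityMeasure μ]
    (N : ℕ) (hN : 0 < N)
    (S : Fin N → Ω → ℝ) (Y : Fin N → Ω → 𝒴)
    (hSmeas : ∀ i, Measurable (S i)) (hYmeas : ∀ i, Measurable (Y i))
    (hindep : iIndepFun (fun i ω => (S i ω, Y i ω)) μ)
    (hlaw : ∀ i, μ.map (fun ω => (S i ω, Y i ω)) = (expMeasure 1).prod P)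
    (X : Ω → 𝒳) (hXmeas : Measurable X)
    (V : Ω → 𝒱) (hVmeas : Measurable V)
    (hXindep : IndepFun X (fun ω (i : Fin N) => (S i ω, Y i ω)) μ)
    (hVindep : IndepFun V (fun ω => (X ω, fun i : Fin N => (S i ω, Y i ω))) μ)
    (Up Uq : Ω → Fin N) (hUpmeas : Measurable Up) (hUqmeas : Measurable Uq)
    (hUp : ∀ ω j,
      S (Up ω) ω * pY (Y (Up ω) ω) / pYX (X ω) (Y (Up ω) ω)
        ≤ S j ω * pY (Y j ω) / pYX (X ω) (Y j ω))
    (ζ : 𝒳 → 𝒴 → 𝒱 → 𝒵)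
    (hζmeas : Measurable fun p : 𝒳 × 𝒴 × 𝒱 => ζ p.1 p.2.1 p.2.2)
    (Z : Ω → 𝒵) (hZ : Z = fun ω => ζ (X ω) (Y (Up ω) ω) (V ω))
    (hUq : ∀ ω j,
      S (Uq ω) ω * pY (Y (Uq ω) ω) / QYZ (Z ω) (Y (Uq ω) ω)
        ≤ S j ω * pY (Y j ω) / QYZ (Z ω) (Y j ω))
    (k : Fin N) (x : 𝒳) (z : 𝒵) (yv : Fin N → 𝒴) :
    μ[|{ω | Up ω = k ∧ X ω = x ∧ Z ω = z ∧ ∀ i, Y i ω = yv i}] {ω | Up ω ≠ Uq ω}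
      ≤ ENNReal.ofReal (1 - (1 + pYX x (yv k) / QYZ z (yv k) *
          (((N : ℝ)⁻¹ * ∑ j, QYZ z (yv j) / pY (yv j)) /
            ((N : ℝ)⁻¹ * ∑ j, pYX x (yv j) / pY (yv j))))⁻¹) := by
  classical
  haveI : Nonempty (Fin N) := ⟨k⟩
  -- weights
  set w : Fin N → ℝ := fun j => pY (yv j) / pYX x (yv j) with hwdef
  set v : Fin N → ℝ := fun j => pY (yv j) / QYZ z (yv j) with hvdef
  have hw : ∀ j, 0 < w j := fun j => div_pos (hpY_pos _) (hpYX_pos _ _)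
  have hv : ∀ j, 0 < v j := fun j => div_pos (hpY_pos _) (hQ_pos _ _)
  set a : Fin N → ℝ := fun j => w k / w j with hadef
  set b : Fin N → ℝ := fun j => v k / v j with hbdef
  have ha : ∀ j, 0 < a j := fun j => div_pos (hw k) (hw j)
  have hb : ∀ j, 0 < b j := fun j => div_pos (hv k) (hv j)
  have hak : a k = 1 := div_self (hw k).ne'
  set U : Finset (Fin N) := {k}ᶜ with hUdef
  -- the V-event
  set Gv : Set 𝒱 := (fun vv => ζ x (yv k) vv) ⁻¹' {z} with hGvdef
  have hGvm : MeasurableSet Gv := by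
    have hζm : Measurable (fun vv => ζ x (yv k) vv) :=
      hζmeas.comp (measurable_const.prodMk (measurable_const.prodMk measurable_id))
    exact hζm (measurableSet_singleton z)
  set G : Set Ω := V ⁻¹' Gv with hGdef
  -- rewrite the conditioning event
  set E : Set Ω := {ω | Up ω = k ∧ X ω = x ∧ Z ω = z ∧ ∀ i, Y i ω = yv i} with hEdef
  have hErepr : E = {ω | Up ω = k ∧ X ω = x ∧ (∀ i, Y i ω = yv i) ∧ ω ∈ G} := by
    ext ω
    simp only [hEdef, Set.mem_setOf_eq, hGdef, hGvdef, Set.mem_preimage,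
      Set.mem_singleton_iff]
    constructor
    · rintro ⟨h1, h2, h3, h4⟩
      refine ⟨h1, h2, h4, ?_⟩
      rw [← h3, hZ]
      simp [h1, h2, h4 k]
    · rintro ⟨h1, h2, h4, h3⟩
      refine ⟨h1, h2, ?_, h4⟩
      rw [hZ]
      simp only [h1, h2, h4 k]
      exact h3
  have hEmeas : MeasurableSet E := by
    rw [hErepr]
    have : {ω | Up ω = k ∧ X ω = x ∧ (∀ i, Y i ω = yv i) ∧ ω ∈ G}
        = (Up ⁻¹' {k}) ∩ ((X ⁻¹' {x}) ∩ ((⋂ i, Y i ⁻¹' {yv i}) ∩ G)) := by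
      ext ω; simp [Set.mem_iInter, and_assoc]
    rw [this]
    exact (hUpmeas (measurableSet_singleton k)).inter
      ((hXmeas (measurableSet_singleton x)).inter
        ((MeasurableSet.iInter (fun i => hYmeas i (measurableSet_singleton (yv i)))).inter
          (hVmeas hGvm)))
  -- the two (S,Y)-events
  set BA : Set (Fin N → ℝ × 𝒴) := {f | (∀ i, (f i).2 = yv i) ∧
    ∀ j, j ≠ k → (f j).1 ∈ Set.Ici (a j * (f k).1)} with hBAdef
  set BM : Set (Fin N → ℝ × 𝒴) := {f | (∀ i, (f i).2 = yv i) ∧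
    ∀ j, j ≠ k → (f j).1 ∈ Set.Ioi (max (a j * (f k).1) (b j * (f k).1))} with hBMdef
  have hBAm : MeasurableSet BA := by
    have : BA = (⋂ i, (fun f : Fin N → ℝ × 𝒴 => (f i).2) ⁻¹' {yv i}) ∩
        ⋂ j, ⋂ (_ : j ≠ k), {f : Fin N → ℝ × 𝒴 | a j * (f k).1 ≤ (f j).1} := by
      ext f; simp [hBAdef, Set.mem_iInter]
    rw [this]
    refine (MeasurableSet.iInter fun i =>
      ((measurable_pi_apply i).snd) (measurableSet_singleton _)).inter
      (MeasurableSet.iInter fun j => MeasurableSet.iInter fun _ => ?_)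
    exact measurableSet_le (((measurable_pi_apply k).fst).const_mul _)
      ((measurable_pi_apply j).fst)
  have hBMm : MeasurableSet BM := by
    have : BM = (⋂ i, (fun f : Fin N → ℝ × 𝒴 => (f i).2) ⁻¹' {yv i}) ∩
        ⋂ j, ⋂ (_ : j ≠ k),
          {f : Fin N → ℝ × 𝒴 | max (a j * (f k).1) (b j * (f k).1) < (f j).1} := by
      ext f; simp [hBMdef, Set.mem_iInter]
    rw [this]
    refine (MeasurableSet.iInter fun i =>
      ((measurable_pi_apply i).snd) (measurableSet_singleton _)).inter
      (MeasurableSet.iInter fun j => MeasurableSet.iInter fun _ => ?_)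
    exact measurableSet_lt
      ((((measurable_pi_apply k).fst).const_mul _).max
        (((measurable_pi_apply k).fst).const_mul _))
      ((measurable_pi_apply j).fst)
  set T : Ω → (Fin N → ℝ × 𝒴) := fun ω i => (S i ω, Y i ω) with hTdef
  have hTm : Measurable T := measurable_pi_lambda _ (fun i => (hSmeas i).prodMk (hYmeas i))
  -- splitting off the independent factors
  have hsplit : ∀ B : Set (Fin N → ℝ × 𝒴), MeasurableSet B →
      μ (G ∩ ({ω | X ω = x} ∩ T ⁻¹' B))
        = μ G * (μ {ω | X ω = x} * μ (T ⁻¹' B)) := by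
    intro B hB
    have h1 : {ω | X ω = x} ∩ T ⁻¹' B
        = (fun ω => (X ω, T ω)) ⁻¹' (({x} : Set 𝒳) ×ˢ B) := by
      ext ω
      simp only [Set.mem_inter_iff, Set.mem_setOf_eq, Set.mem_preimage, Set.mem_prod,
        Set.mem_singleton_iff]
    have h2 := hVindep.measure_inter_preimage_eq_mul Gv (({x} : Set 𝒳) ×ˢ B)
      hGvm ((measurableSet_singleton x).prod hB)
    have h3 := hXindep.measure_inter_preimage_eq_mul ({x} : Set 𝒳) B
      (measurableSet_singleton x) hB
    have hX1 : X ⁻¹' ({x} : Set 𝒳) = {ω | X ω = x} := by ext ω; simp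
    rw [h1, hGdef]
    rw [h2]
    have h4 : (fun ω => (X ω, T ω)) ⁻¹' (({x} : Set 𝒳) ×ˢ B)
        = X ⁻¹' ({x} : Set 𝒳) ∩ T ⁻¹' B := by
      ext ω
      simp only [Set.mem_inter_iff, Set.mem_preimage, Set.mem_prod, Set.mem_singleton_iff]
    rw [h4, h3, hX1]
  -- measures of the two (S,Y)-events, via the key computation
  set Pi : ℝ≥0∞ := ∏ i, P {yv i} with hPidef
  have hAval : μ (T ⁻¹' BA) = Pi * ENNReal.ofReal (1 + ∑ j ∈ U, a j)⁻¹ := by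
    have : T ⁻¹' BA = {ω | (∀ i, Y i ω = yv i) ∧
        ∀ j, j ≠ k → S j ω ∈ Set.Ici (a j * S k ω)} := by
      ext ω; simp [hBAdef, hTdef]
    rw [this]
    refine key P μ S Y hSmeas hYmeas hindep hlaw k yv a (fun j => (ha j).le)
      (fun j s => Set.Ici (a j * s)) ?_ ?_
    · intro j
      exact measurableSet_le (measurable_fst.const_mul _) measurable_snd
    · intro j s hs
      exact expTail' (mul_nonneg (ha j).le hs)
  have hMval : μ (T ⁻¹' BM)
      = Pi * ENNReal.ofReal (1 + ∑ j ∈ U, max (a j) (b j))⁻¹ := by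
    have : T ⁻¹' BM = {ω | (∀ i, Y i ω = yv i) ∧
        ∀ j, j ≠ k → S j ω ∈ Set.Ioi (max (a j * S k ω) (b j * S k ω))} := by
      ext ω; simp [hBMdef, hTdef]
    rw [this]
    refine key P μ S Y hSmeas hYmeas hindep hlaw k yv (fun j => max (a j) (b j))
      (fun j => le_max_of_le_left (ha j).le)
      (fun j s => Set.Ioi (max (a j * s) (b j * s))) ?_ ?_
    · intro j
      exact measurableSet_lt
        ((measurable_fst.const_mul _).max (measurable_fst.const_mul _)) measurable_snd
    · intro j s hs
      show expMeasure 1 (Set.Ioi (max (a j * s) (b j * s)))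
        = ENNReal.ofReal (Real.exp (-(max (a j) (b j) * s)))
      have hmax : max (a j * s) (b j * s) = max (a j) (b j) * s := by
        rw [max_mul_of_nonneg _ _ hs]
      rw [hmax]
      exact expTail (mul_nonneg (le_max_of_le_left (ha j).le) hs)
  -- inclusion 1 : E ⊆ G ∩ ({X = x} ∩ T⁻¹ BA)
  have hI1 : E ⊆ G ∩ ({ω | X ω = x} ∩ T ⁻¹' BA) := by
    intro ω hω
    rw [hErepr] at hω
    obtain ⟨h1, h2, h4, h3⟩ := hω
    refine ⟨h3, h2, ?_⟩
    simp only [Set.mem_preimage, hBAdef, Set.mem_setOf_eq, hTdef]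
    refine ⟨h4, fun j hj => ?_⟩
    have := hUp ω j
    rw [h1, h2] at this
    rw [h4 k, h4 j] at this
    have hthis : S k ω * w k ≤ S j ω * w j := by
      simpa [hwdef, mul_div_assoc] using this
    simp only [Set.mem_Ici, hadef]
    rw [div_mul_eq_mul_div, div_le_iff₀ (hw j)]
    nlinarith [hthis]
  -- inclusion 2 : G ∩ ({X = x} ∩ T⁻¹ BM) ⊆ E ∩ {Up = Uq}
  have hI2 : G ∩ ({ω | X ω = x} ∩ T ⁻¹' BM) ⊆ E ∩ {ω | Up ω = Uq ω} := by
    rintro ω ⟨h3, h2, h5⟩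
    simp only [Set.mem_preimage, hBMdef, Set.mem_setOf_eq, hTdef] at h5
    obtain ⟨h4, h6⟩ := h5
    have h2' : X ω = x := h2
    -- Up ω = k
    have hUpk : Up ω = k := by
      by_contra hne
      have h7 := h6 (Up ω) hne
      simp only [Set.mem_Ioi, lt_max_iff] at h7  -- wrong direction; fix below
      have h8 := hUp ω k
      rw [h2'] at h8
      rw [h4 k, h4 (Up ω)] at h8
      have h8' : S (Up ω) ω * w (Up ω) ≤ S k ω * w k := by
        simpa [hwdef, mul_div_assoc] using h8
      have h9 : a (Up ω) * S k ω < S (Up ω) ω :=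
        lt_of_le_of_lt (le_max_left _ _) h7
      rw [hadef] at h9
      have h10 : w k * S k ω < S (Up ω) ω * w (Up ω) := by
        rw [div_mul_eq_mul_div, div_lt_iff₀ (hw (Up ω))] at h9
        nlinarith
      nlinarith
    have hZω : Z ω = z := by
      rw [hZ]
      simp only [hUpk, h2', h4 k]
      exact h3
    have hUqk : Uq ω = k := by
      by_contra hne
      have h7 := h6 (Uq ω) hne
      have h8 := hUq ω k
      rw [hZω] at h8
      rw [h4 k, h4 (Uq ω)] at h8
      have h8' : S (Uq ω) ω * v (Uq ω) ≤ S k ω * v k := by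
        simpa [hvdef, mul_div_assoc] using h8
      have h9 : b (Uq ω) * S k ω < S (Uq ω) ω :=
        lt_of_le_of_lt (le_max_right _ _) h7
      rw [hbdef] at h9
      have h10 : v k * S k ω < S (Uq ω) ω * v (Uq ω) := by
        rw [div_mul_eq_mul_div, div_lt_iff₀ (hv (Uq ω))] at h9
        nlinarith
      nlinarith
    constructor
    · rw [hEdef]
      exact ⟨hUpk, h2', hZω, h4⟩
    · simp only [Set.mem_setOf_eq, hUpk, hUqk]
  -- measure bounds
  have hEub : μ E ≤ (μ G * (μ {ω | X ω = x} * Pi)) *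
      ENNReal.ofReal (1 + ∑ j ∈ U, a j)⁻¹ := by
    calc μ E ≤ μ (G ∩ ({ω | X ω = x} ∩ T ⁻¹' BA)) := measure_mono hI1
      _ = μ G * (μ {ω | X ω = x} * (Pi * ENNReal.ofReal (1 + ∑ j ∈ U, a j)⁻¹)) := by
          rw [hsplit BA hBAm, hAval]
      _ = _ := by ring
  have hLlb : (μ G * (μ {ω | X ω = x} * Pi)) *
      ENNReal.ofReal (1 + ∑ j ∈ U, max (a j) (b j))⁻¹
        ≤ μ (E ∩ {ω | Up ω = Uq ω}) := by
    calc (μ G * (μ {ω | X ω = x} * Pi)) *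
        ENNReal.ofReal (1 + ∑ j ∈ U, max (a j) (b j))⁻¹
        = μ G * (μ {ω | X ω = x} *
            (Pi * ENNReal.ofReal (1 + ∑ j ∈ U, max (a j) (b j))⁻¹)) := by ring
      _ = μ (G ∩ ({ω | X ω = x} ∩ T ⁻¹' BM)) := by rw [hsplit BM hBMm, hMval]
      _ ≤ _ := measure_mono hI2
  -- real-number algebra
  set q : ℝ := pYX x (yv k) / QYZ z (yv k) *
      (((N : ℝ)⁻¹ * ∑ j, QYZ z (yv j) / pY (yv j)) /
        ((N : ℝ)⁻¹ * ∑ j, pYX x (yv j) / pY (yv j))) with hqdef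
  set Sa : ℝ := ∑ j, a j with hSadef
  set Sb : ℝ := ∑ j, b j with hSbdef
  have hSa_pos : 0 < Sa := Finset.sum_pos (fun j _ => ha j) Finset.univ_nonempty
  have hSb_pos : 0 < Sb := Finset.sum_pos (fun j _ => hb j) Finset.univ_nonempty
  have hSacompl : (1 : ℝ) + ∑ j ∈ U, a j = Sa := by
    have := Finset.sum_compl_add_sum ({k} : Finset (Fin N)) a
    rw [Finset.sum_singleton, hak] at this
    rw [add_comm, hUdef, this]
  have hsum_le : 1 + ∑ j ∈ U, max (a j) (b j) ≤ Sa + Sb := by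
    have h1 : ∑ j ∈ U, max (a j) (b j) ≤ ∑ j ∈ U, (a j + b j) :=
      Finset.sum_le_sum (fun j _ => max_le (le_add_of_nonneg_right (hb j).le)
        (le_add_of_nonneg_left (ha j).le))
    have h2 : ∑ j, (a j + b j) = Sa + Sb := Finset.sum_add_distrib
    have h3 := Finset.sum_compl_add_sum ({k} : Finset (Fin N)) (fun j => a j + b j)
    rw [Finset.sum_singleton] at h3
    have hbk := hb k
    rw [← hUdef] at h3
    nlinarith [h3, h2, hak]
  have hq_eq : q = Sb / Sa := by
    set SQ : ℝ := ∑ j, QYZ z (yv j) / pY (yv j) with hSQdef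
    set SP : ℝ := ∑ j, pYX x (yv j) / pY (yv j) with hSPdef
    have hSQ_pos : 0 < SQ :=
      Finset.sum_pos (fun j _ => div_pos (hQ_pos _ _) (hpY_pos _)) Finset.univ_nonempty
    have hSP_pos : 0 < SP :=
      Finset.sum_pos (fun j _ => div_pos (hpYX_pos _ _) (hpY_pos _)) Finset.univ_nonempty
    have hNne : ((N : ℝ))⁻¹ ≠ 0 := by
      have : (0:ℝ) < (N : ℝ) := by exact_mod_cast hN
      positivity
    have hSb_eq : Sb = v k * SQ := by
      rw [hSbdef, hSQdef, Finset.mul_sum]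
      apply Finset.sum_congr rfl
      intro j _
      simp only [hbdef, hvdef]
      field_simp
    have hSa_eq : Sa = w k * SP := by
      rw [hSadef, hSPdef, Finset.mul_sum]
      apply Finset.sum_congr rfl
      intro j _
      simp only [hadef, hwdef]
      field_simp
    have hfrac : pYX x (yv k) / QYZ z (yv k) = v k / w k := by
      simp only [hvdef, hwdef]
      have h1 := (hpY_pos (yv k)).ne'
      have h2 := (hQ_pos z (yv k)).ne'
      have h3 := (hpYX_pos x (yv k)).ne'
      field_simp
    have hNcancel : ((N : ℝ)⁻¹ * SQ) / ((N : ℝ)⁻¹ * SP) = SQ / SP :=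
      mul_div_mul_left SQ SP hNne
    rw [hqdef, hNcancel, hfrac, hSb_eq, hSa_eq, div_mul_div_comm]
  have hq_nonneg : 0 ≤ q := by
    rw [hq_eq]; positivity
  have hreal : (1 + q)⁻¹ ≤ (1 + ∑ j ∈ U, a j) * (1 + ∑ j ∈ U, max (a j) (b j))⁻¹ := by
    have hm_pos : (0:ℝ) < 1 + ∑ j ∈ U, max (a j) (b j) := by
      have : (0:ℝ) ≤ ∑ j ∈ U, max (a j) (b j) :=
        Finset.sum_nonneg (fun j _ => le_max_of_le_left (ha j).le)
      linarith
    have h1 : (1 : ℝ) + q = (Sa + Sb) / Sa := by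
      rw [hq_eq]; field_simp
    rw [h1, hSacompl]
    rw [inv_div]
    rw [← div_eq_mul_inv]
    exact div_le_div_of_nonneg_left hSa_pos.le hm_pos hsum_le
  -- conditional probability endgame
  by_cases hE0 : μ E = 0
  · rw [cond_apply hEmeas μ]
    have h0 : μ (E ∩ {ω | Up ω ≠ Uq ω}) = 0 :=
      measure_mono_null Set.inter_subset_left hE0
    rw [h0, mul_zero]
    exact zero_le
  · have hDmc : MeasurableSet {ω | Up ω = Uq ω} :=
      measurableSet_eq_fun hUpmeas hUqmeas
    have hsplitD : μ (E ∩ {ω | Up ω ≠ Uq ω}) = μ E - μ (E ∩ {ω | Up ω = Uq ω}) := by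
      have h1 : E ∩ {ω | Up ω ≠ Uq ω} = E \ (E ∩ {ω | Up ω = Uq ω}) := by
        ext ω
        simp only [Set.mem_inter_iff, Set.mem_setOf_eq, Set.mem_diff, ne_eq]
        tauto
      rw [h1, measure_diff Set.inter_subset_left (hEmeas.inter hDmc).nullMeasurableSet
        (measure_ne_top μ _)]
    rw [cond_apply hEmeas μ, hsplitD,
      ENNReal.mul_sub (fun _ _ => ENNReal.inv_ne_top.mpr hE0),
      ENNReal.inv_mul_cancel hE0 (measure_ne_top μ E)]
    have hRHS : ENNReal.ofReal (1 - (1 + q)⁻¹) = 1 - ENNReal.ofReal (1 + q)⁻¹ := by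
      rw [ENNReal.ofReal_sub _ (by positivity), ENNReal.ofReal_one]
    rw [hRHS]
    refine tsub_le_tsub_left ?_ 1
    -- main chain
    set c2 : ℝ≥0∞ := μ G * (μ {ω | X ω = x} * Pi) with hc2def
    have hc2top : c2 ≠ ∞ := by
      rw [hc2def]
      exact ENNReal.mul_ne_top (measure_ne_top μ G)
        (ENNReal.mul_ne_top (measure_ne_top μ _)
          (by
            rw [hPidef]
            exact (lt_of_le_of_lt (Finset.prod_le_one (fun i _ => zero_le)
              (fun i _ => prob_le_one)) ENNReal.one_lt_top).ne))
    have hc2ne : c2 ≠ 0 := by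
      intro hc
      apply hE0
      refine le_antisymm ?_ zero_le
      calc μ E ≤ c2 * ENNReal.ofReal (1 + ∑ j ∈ U, a j)⁻¹ := hEub
        _ = 0 := by rw [hc, zero_mul]
    have hinv : (μ E)⁻¹ ≥ (c2 * ENNReal.ofReal (1 + ∑ j ∈ U, a j)⁻¹)⁻¹ :=
      ENNReal.inv_le_inv' hEub
    have hmul : (c2 * ENNReal.ofReal (1 + ∑ j ∈ U, a j)⁻¹)⁻¹ *
        (c2 * ENNReal.ofReal (1 + ∑ j ∈ U, max (a j) (b j))⁻¹)
          = ENNReal.ofReal ((1 + ∑ j ∈ U, a j) * (1 + ∑ j ∈ U, max (a j) (b j))⁻¹) := by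
      have hApos : (0:ℝ) < 1 + ∑ j ∈ U, a j := by
        rw [hSacompl]; exact hSa_pos
      have hAinv : (ENNReal.ofReal (1 + ∑ j ∈ U, a j)⁻¹)⁻¹
          = ENNReal.ofReal (1 + ∑ j ∈ U, a j) := by
        rw [ENNReal.ofReal_inv_of_pos hApos, inv_inv]
      rw [ENNReal.mul_inv (Or.inl hc2ne) (Or.inl hc2top)]
      calc c2⁻¹ * (ENNReal.ofReal (1 + ∑ j ∈ U, a j)⁻¹)⁻¹ *
          (c2 * ENNReal.ofReal (1 + ∑ j ∈ U, max (a j) (b j))⁻¹)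
          = (c2⁻¹ * c2) * ((ENNReal.ofReal (1 + ∑ j ∈ U, a j)⁻¹)⁻¹ *
              ENNReal.ofReal (1 + ∑ j ∈ U, max (a j) (b j))⁻¹) := by ring
        _ = (ENNReal.ofReal (1 + ∑ j ∈ U, a j)⁻¹)⁻¹ *
              ENNReal.ofReal (1 + ∑ j ∈ U, max (a j) (b j))⁻¹ := by
            rw [ENNReal.inv_mul_cancel hc2ne hc2top, one_mul]
        _ = ENNReal.ofReal ((1 + ∑ j ∈ U, a j) * (1 + ∑ j ∈ U, max (a j) (b j))⁻¹) := by
            rw [hAinv, ← ENNReal.ofReal_mul hApos.le]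
    calc ENNReal.ofReal (1 + q)⁻¹
        ≤ ENNReal.ofReal ((1 + ∑ j ∈ U, a j) * (1 + ∑ j ∈ U, max (a j) (b j))⁻¹) :=
          ENNReal.ofReal_le_ofReal hreal
      _ = (c2 * ENNReal.ofReal (1 + ∑ j ∈ U, a j)⁻¹)⁻¹ *
          (c2 * ENNReal.ofReal (1 + ∑ j ∈ U, max (a j) (b j))⁻¹) := hmul.symm
      _ ≤ (μ E)⁻¹ * μ (E ∩ {ω | Up ω = Uq ω}) := mul_le_mul' hinv hLlb
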